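/- Let m ≤ n+1, f ∈ H_d[m], Z := {z ∈ ℝ^{n+1} : f(z) = 0}, M_S := Z ∩ S^n, p ∈ S^n, and T := p^⊥. Then for all ε ∈ (0,1), φ(Z ∩ B_{ε,T}(p)) = M_S ∩ φ(B_{h(ε)}(p)), where h(ε) := ε/√(1+ε²), φ(z) := z/‖z‖ for z ≠ 0, B_{ε,T}(p) := p + {v ∈ T : ‖v‖ < ε}, and B_{h(ε)}(p) is the open Euclidean ball of radius h(ε) centered at p in ℝ^{n+1} (φ applied to a set means its image, with 0 excluded). -/

import Mathlib

open Function Metric Filter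
open scoped ENNReal

noncomputable section

/-- Evaluation of a polynomial system as a map between Euclidean spaces. -/
def evalSys {n m : ℕ} (f : Fin m → MvPolynomial (Fin (n + 1)) ℝ) :
    EuclideanSpace ℝ (Fin (n + 1)) → EuclideanSpace ℝ (Fin m) :=
  fun x => WithLp.toLp 2 (fun i => MvPolynomial.eval (fun j => x j) (f i))

/-- Moore–Penrose inverse A† = Aᵀ (A Aᵀ)⁻¹ of a (surjective) continuous linear map
between real inner product spaces. -/
def pinv {E F : Type*} [NormedAddCommGroup E] [InnerProductSpace ℝ E] [CompleteSpace E]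
    [NormedAddCommGroup F] [InnerProductSpace ℝ F] [CompleteSpace F]
    (A : E →L[ℝ] F) : F →L[ℝ] E :=
  (ContinuousLinearMap.adjoint A).comp (Ring.inverse (A.comp (ContinuousLinearMap.adjoint A)))

/-- The diagonal matrix Δ(x) with diagonal entries ‖x‖^(dᵢ−1)·√dᵢ, as a linear map ℝ^m → ℝ^m. -/
def Delta {n m : ℕ} (d : Fin m → ℕ) (x : EuclideanSpace ℝ (Fin (n + 1))) :
    EuclideanSpace ℝ (Fin m) →L[ℝ] EuclideanSpace ℝ (Fin m) :=
  LinearMap.toContinuousLinearMap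
    (Matrix.toEuclideanLin (Matrix.diagonal fun i => ‖x‖ ^ (d i - 1) * Real.sqrt (d i)))

/-- Weyl norm squared of a polynomial system: Σᵢ Σ_a coeff²·(dᵢ choose a)⁻¹. -/
def weylNormSq {n m : ℕ} (f : Fin m → MvPolynomial (Fin (n + 1)) ℝ) : ℝ :=
  ∑ i, ∑ a ∈ (f i).support, ((f i).coeff a) ^ 2 / (Nat.multinomial a.support a : ℝ)

/-- Weyl norm of a polynomial system. -/
def weylNorm {n m : ℕ} (f : Fin m → MvPolynomial (Fin (n + 1)) ℝ) : ℝ :=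
  Real.sqrt (weylNormSq f)

/-- μ_norm(f,x) = ‖f‖·‖Df(x)†·Δ(x)‖ (real-valued formula, meaningful when Df(x) is surjective). -/
def munormR {n m : ℕ} (d : Fin m → ℕ) (f : Fin m → MvPolynomial (Fin (n + 1)) ℝ)
    (x : EuclideanSpace ℝ (Fin (n + 1))) : ℝ :=
  weylNorm f * ‖(pinv (fderiv ℝ (evalSys f) x)).comp (Delta d x)‖

open Classical in
/-- μ_norm(f,x), with value ∞ when Df(x) is not surjective. -/
def munormE {n m : ℕ} (d : Fin m → ℕ) (f : Fin m → MvPolynomial (Fin (n + 1)) ℝ)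
    (x : EuclideanSpace ℝ (Fin (n + 1))) : ℝ≥0∞ :=
  if Surjective ⇑(fderiv ℝ (evalSys f) x) then ENNReal.ofReal (munormR d f x) else ⊤

/-- The maximal degree D. -/
def Dmax {m : ℕ} (d : Fin m → ℕ) : ℕ := Finset.univ.sup d

/-- Radial projection onto the unit sphere, φ(z) = z/‖z‖. -/
def sphProj {k : ℕ} (y : EuclideanSpace ℝ (Fin k)) : EuclideanSpace ℝ (Fin k) :=
  ‖y‖⁻¹ • y

open scoped RealInnerProductSpace

lemma homog_eval_smul {σ : Type*} {φ : MvPolynomial σ ℝ} {k : ℕ}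
    (hφ : φ.IsHomogeneous k) (c : ℝ) (x : σ → ℝ) :
    MvPolynomial.eval (fun j => c * x j) φ = c ^ k * MvPolynomial.eval x φ := by
  rw [MvPolynomial.eval_eq, MvPolynomial.eval_eq, Finset.mul_sum]
  refine Finset.sum_congr rfl fun a ha => ?_
  have hdeg : ∑ i ∈ a.support, a i = k := by
    have := hφ (MvPolynomial.mem_support_iff.mp ha)
    simpa [Finsupp.weight, Finsupp.linearCombination, Finsupp.sum] using this
  calc MvPolynomial.coeff a φ * ∏ i ∈ a.support, (c * x i) ^ a i
      = MvPolynomial.coeff a φ * ((∏ i ∈ a.support, c ^ a i) * ∏ i ∈ a.support, x i ^ a i) := by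
        rw [← Finset.prod_mul_distrib]; simp [mul_pow]
    _ = c ^ k * (MvPolynomial.coeff a φ * ∏ i ∈ a.support, x i ^ a i) := by
        rw [Finset.prod_pow_eq_pow_sum, hdeg]; ring

lemma evalSys_zero_smul {n m : ℕ} {d : Fin m → ℕ} {f : Fin m → MvPolynomial (Fin (n + 1)) ℝ}
    (hf : ∀ i, (f i).IsHomogeneous (d i)) (c : ℝ) {x : EuclideanSpace ℝ (Fin (n + 1))}
    (hx : evalSys f x = 0) : evalSys f (c • x) = 0 := by
  ext i
  have h1 : MvPolynomial.eval (fun j => x j) (f i) = 0 := by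
    have := congrArg (fun v : EuclideanSpace ℝ (Fin m) => v i) hx
    simpa [evalSys] using this
  show MvPolynomial.eval (fun j => (c • x) j) (f i) = (0 : EuclideanSpace ℝ (Fin m)) i
  have h2 : (fun j => (c • x) j) = fun j => c * x j := by funext j; simp
  rw [h2, homog_eval_smul (hf i), h1]
  simp

/-- (Lemma `M1`.) For ε ∈ (0,1),
φ(Z ∩ B_{ε,T}(p)) = M_S ∩ φ(B_{h(ε)}(p)) with h(ε) = ε/√(1+ε²). -/
theorem statement17 {n m : ℕ} (hm : m ≤ n + 1) (d : Fin m → ℕ) (hd : ∀ i, 1 ≤ d i)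
    (f : Fin m → MvPolynomial (Fin (n + 1)) ℝ) (hf : ∀ i, (f i).IsHomogeneous (d i))
    (p : EuclideanSpace ℝ (Fin (n + 1)))
    (hp : p ∈ Metric.sphere (0 : EuclideanSpace ℝ (Fin (n + 1))) 1)
    (T : Submodule ℝ (EuclideanSpace ℝ (Fin (n + 1)))) (hT : T = (ℝ ∙ p)ᗮ)
    (ε : ℝ) (hε0 : 0 < ε) (hε1 : ε < 1) :
    sphProj '' ({z | evalSys f z = 0} ∩ {z | ∃ v ∈ T, ‖v‖ < ε ∧ z = p + v}) =
      {x | x ∈ Metric.sphere (0 : EuclideanSpace ℝ (Fin (n + 1))) 1 ∧ evalSys f x = 0} ∩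
        sphProj '' Metric.ball p (ε / Real.sqrt (1 + ε ^ 2)) := by
  have hp1 : ‖p‖ = 1 := by simpa using hp
  have hsq : (0:ℝ) < Real.sqrt (1 + ε ^ 2) := Real.sqrt_pos.mpr (by positivity)
  obtain ⟨h, hh⟩ : ∃ h : ℝ, h = ε / Real.sqrt (1 + ε ^ 2) := ⟨_, rfl⟩
  rw [← hh]
  have hhpos : 0 < h := hh ▸ div_pos hε0 hsq
  have hh2 : h ^ 2 = ε ^ 2 / (1 + ε ^ 2) := by
    rw [hh, div_pow, Real.sq_sqrt (by positivity)]
  have hh1 : h ^ 2 < 1 := by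
    rw [hh2, div_lt_one (by positivity)]; nlinarith
  ext x
  simp only [Set.mem_image, Set.mem_inter_iff, Set.mem_setOf_eq, Metric.mem_ball,
    mem_sphere_iff_norm, sub_zero, dist_eq_norm]
  constructor
  · rintro ⟨z, ⟨hz0, v, hvT, hvn, rfl⟩, rfl⟩
    have hpv : ⟪p, v⟫ = 0 := by
      rw [hT] at hvT
      exact Submodule.mem_orthogonal_singleton_iff_inner_right.mp hvT
    have hN2 : ‖p + v‖ ^ 2 = 1 + ‖v‖ ^ 2 := by
      rw [norm_add_sq_real, hp1, hpv]; ring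
    have hNpos : (0:ℝ) < ‖p + v‖ := by nlinarith [norm_nonneg v, norm_nonneg (p + v)]
    refine ⟨⟨?_, ?_⟩, ?_⟩
    · rw [sphProj, norm_smul, norm_inv, norm_norm, inv_mul_cancel₀ hNpos.ne']
    · exact evalSys_zero_smul hf _ hz0
    · refine ⟨(‖p + v‖ ^ 2)⁻¹ • (p + v), ?_, ?_⟩
      · -- distance bound
        have hrw : (‖p + v‖ ^ 2)⁻¹ • (p + v) - p
            = ((‖p + v‖ ^ 2)⁻¹ - 1) • p + (‖p + v‖ ^ 2)⁻¹ • v := by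
          rw [smul_add]; module
        have hinner : ⟪((‖p + v‖ ^ 2)⁻¹ - 1) • p, (‖p + v‖ ^ 2)⁻¹ • v⟫ = 0 := by
          rw [real_inner_smul_left, real_inner_smul_right, hpv]; ring
        have hnsq : ‖(‖p + v‖ ^ 2)⁻¹ • (p + v) - p‖ ^ 2
            = ((‖p + v‖ ^ 2)⁻¹ - 1) ^ 2 + ((‖p + v‖ ^ 2)⁻¹) ^ 2 * ‖v‖ ^ 2 := by
          rw [hrw, norm_add_sq_real, hinner, norm_smul, norm_smul]
          simp [mul_pow, sq_abs, hp1, mul_comm]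
        have hlt : ‖(‖p + v‖ ^ 2)⁻¹ • (p + v) - p‖ ^ 2 < h ^ 2 := by
          rw [hnsq, hh2, hN2]
          have hs : (0:ℝ) < 1 + ‖v‖ ^ 2 := by positivity
          have key : (((1 + ‖v‖ ^ 2)⁻¹ - 1) ^ 2 + ((1 + ‖v‖ ^ 2)⁻¹) ^ 2 * ‖v‖ ^ 2)
              = ‖v‖ ^ 2 / (1 + ‖v‖ ^ 2) := by
            field_simp
            ring
          rw [key, div_lt_div_iff₀ hs (by positivity)]
          nlinarith [norm_nonneg v]
        exact lt_of_pow_lt_pow_left₀ 2 hhpos.le hlt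
      · -- sphProj equality
        rw [sphProj, sphProj, norm_smul, norm_inv, norm_pow, norm_norm, smul_smul]
        congr 1
        field_simp
  · rintro ⟨⟨hx1, hx0⟩, y, hy, hxy⟩
    have hy0 : y ≠ 0 := by
      intro h0
      apply one_ne_zero (α := ℝ)
      rw [← hx1, ← hxy, h0, sphProj, smul_zero, norm_zero]
    have hr : (0:ℝ) < ‖y‖ := norm_pos_iff.mpr hy0
    obtain ⟨c, hc⟩ : ∃ c : ℝ, c = ⟪x, p⟫ := ⟨_, rfl⟩
    have hyp : ⟪y, p⟫ = ‖y‖ * c := by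
      rw [hc, ← hxy, sphProj, real_inner_smul_left]
      field_simp
    have hsub : ‖y - p‖ ^ 2 = ‖y‖ ^ 2 - 2 * (‖y‖ * c) + 1 := by
      rw [norm_sub_sq_real, hyp, hp1]; ring
    have hylt : ‖y - p‖ ^ 2 < h ^ 2 :=
      pow_lt_pow_left₀ hy (norm_nonneg _) (by norm_num)
    have hkey : ‖y‖ ^ 2 - 2 * (‖y‖ * c) + 1 < h ^ 2 := by rw [← hsub]; exact hylt
    have hrc : 0 < ‖y‖ * c := by linarith [sq_nonneg (‖y‖)]
    have hcpos : 0 < c := by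
      rcases mul_pos_iff.mp hrc with ⟨_, h'⟩ | ⟨h', _⟩
      · exact h'
      · linarith
    have h3 : 0 ≤ ‖y‖ ^ 2 - 2 * (‖y‖ * c) + c ^ 2 := by
      calc (0:ℝ) ≤ (‖y‖ - c) ^ 2 := sq_nonneg _
        _ = ‖y‖ ^ 2 - 2 * (‖y‖ * c) + c ^ 2 := by ring
    have hc2 : 1 - h ^ 2 < c ^ 2 := by linarith
    have h1 : 1 < c ^ 2 * (1 + ε ^ 2) := by
      have hpos : (0:ℝ) < 1 + ε ^ 2 := by positivity
      have h2 := mul_lt_mul_of_pos_right hc2 hpos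
      rw [hh2, sub_mul, div_mul_cancel₀ _ hpos.ne', one_mul] at h2
      linarith
    refine ⟨c⁻¹ • x, ⟨evalSys_zero_smul hf _ hx0, c⁻¹ • x - p, ?_, ?_, by abel⟩, ?_⟩
    · rw [hT]
      refine Submodule.mem_orthogonal_singleton_iff_inner_right.mpr ?_
      have hpx : ⟪p, x⟫ = c := by rw [real_inner_comm, ← hc]
      calc ⟪p, c⁻¹ • x - p⟫ = c⁻¹ * ⟪p, x⟫ - ⟪p, p⟫ := by
            rw [inner_sub_right, real_inner_smul_right]
        _ = c⁻¹ * c - 1 := by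
            rw [hpx, real_inner_self_eq_norm_sq, hp1]; norm_num
        _ = 0 := by rw [inv_mul_cancel₀ hcpos.ne']; norm_num
    · have hz : ‖c⁻¹ • x‖ = c⁻¹ := by
        rw [norm_smul, norm_inv, Real.norm_eq_abs, abs_of_pos hcpos, hx1, mul_one]
      have hzp : ⟪c⁻¹ • x, p⟫ = 1 := by
        rw [real_inner_smul_left, ← hc, inv_mul_cancel₀ hcpos.ne']
      have hvsq : ‖c⁻¹ • x - p‖ ^ 2 = c⁻¹ ^ 2 - 1 := by
        rw [norm_sub_sq_real, hz, hzp, hp1]; ring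
      have hvlt : ‖c⁻¹ • x - p‖ ^ 2 < ε ^ 2 := by
        have h2 : 1 / c ^ 2 < 1 + ε ^ 2 := by
          rw [div_lt_iff₀ (by positivity : (0:ℝ) < c ^ 2), mul_comm]
          exact h1
        rw [hvsq, inv_pow, ← one_div]
        linarith
      exact lt_of_pow_lt_pow_left₀ 2 hε0.le hvlt
    · rw [sphProj, norm_smul, norm_inv, Real.norm_eq_abs, abs_of_pos hcpos, hx1,
        mul_one, inv_inv, smul_smul, mul_inv_cancel₀ hcpos.ne', one_smul]
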